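/- Let z : ℤ → ℝ → ℝ be a family of differentiable functions satisfying for all n ∈ ℤ and t ∈ ℝ the equation ż_n = z_n (z_{n+1} z_n − 1)(z_n z_{n−1} − 1)(z_{n+2} z_{n+1} − z_{n−1} z_{n−2}). Define w_n(t) = z_{n+1}(t) z_n(t) − 1. Then for all n ∈ ℤ and t ∈ ℝ, ẇ_n = w_n (w_n + 1)(w_{n+2} w_{n+1} − w_{n−1} w_{n−2}), i.e., the transformation w_n = z_{n+1} z_n − 1 maps solutions of the third-level modification to solutions of the second-level modification ẇ_n = w_n(w_n+1)(w_{n+2} w_{n+1} − w_{n−1} w_{n−2}) of the INB equation. -/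

import Mathlib

/-- The transformation `wₙ = z_{n+1} zₙ − 1` maps solutions of
`żₙ = zₙ(z_{n+1}zₙ−1)(zₙz_{n−1}−1)(z_{n+2}z_{n+1} − z_{n−1}z_{n−2})` to solutions of
the second-level modification `ẇₙ = wₙ(wₙ+1)(w_{n+2}w_{n+1} − w_{n−1}w_{n−2})`
of the INB equation. -/
theorem stmt_15 (z : ℤ → ℝ → ℝ)
    (hz : ∀ (n : ℤ) (t : ℝ), HasDerivAt (z n)
      (z n t * (z (n + 1) t * z n t - 1) * (z n t * z (n - 1) t - 1)
        * (z (n + 2) t * z (n + 1) t - z (n - 1) t * z (n - 2) t)) t)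
    (w : ℤ → ℝ → ℝ)
    (hw : ∀ (n : ℤ) (t : ℝ), w n t = z (n + 1) t * z n t - 1) :
    ∀ (n : ℤ) (t : ℝ), HasDerivAt (w n)
      (w n t * (w n t + 1) * (w (n + 2) t * w (n + 1) t - w (n - 1) t * w (n - 2) t)) t := by
  intro n t
  have hwfun : w n = fun s => z (n + 1) s * z n s - 1 := funext (hw n)
  rw [hwfun]
  have h := ((hz (n + 1) t).mul (hz n t)).sub_const 1
  refine h.congr_deriv ?_
  simp only [hw, show n + 1 + 1 = n + 2 from by ring, show n + 1 - 1 = n from by ring,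
    show n + 1 + 2 = n + 3 from by ring, show n + 2 + 1 = n + 3 from by ring]
  ring
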